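/- Let r(z,w) = Im w + |z|⁴ + 100|z|⁶ + 4(Re z)(Re w) − 8(Re w)² (the case A = 8). Then there is no constant C > 0 and no neighborhood U of the origin such that |r_z|² ≤ C·𝓛_r on U. Specifically, along the real curve γ(t) = (z,w) with Im z = 0, Re z = t, Im w = 0, Re w = t/4, the Levi form 𝓛_r vanishes to order 4 in t while |r_z|² vanishes to order 2 in t (|r_z|² = (t²/4 + O(t³))·4 ≥ c·t² for small t ≠ 0, and 𝓛_r(γ(t)) = O(t⁴)). -/

import Mathlib

open Complex

noncomputable section

/-- Complexification of a real-valued function on `ℂ × ℂ`. -/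
def cx (r : ℂ × ℂ → ℝ) : ℂ × ℂ → ℂ := fun p => (r p : ℂ)

/-- Wirtinger derivative `∂f/∂z` (first coordinate). -/
def dz (f : ℂ × ℂ → ℂ) (p : ℂ × ℂ) : ℂ :=
  (1 / 2) * (fderiv ℝ f p (1, 0) - Complex.I * fderiv ℝ f p (Complex.I, 0))

/-- Wirtinger derivative `∂f/∂z̄` (first coordinate). -/
def dzbar (f : ℂ × ℂ → ℂ) (p : ℂ × ℂ) : ℂ :=
  (1 / 2) * (fderiv ℝ f p (1, 0) + Complex.I * fderiv ℝ f p (Complex.I, 0))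

/-- Wirtinger derivative `∂f/∂w` (second coordinate). -/
def dw (f : ℂ × ℂ → ℂ) (p : ℂ × ℂ) : ℂ :=
  (1 / 2) * (fderiv ℝ f p (0, 1) - Complex.I * fderiv ℝ f p (0, Complex.I))

/-- Wirtinger derivative `∂f/∂w̄` (second coordinate). -/
def dwbar (f : ℂ × ℂ → ℂ) (p : ℂ × ℂ) : ℂ :=
  (1 / 2) * (fderiv ℝ f p (0, 1) + Complex.I * fderiv ℝ f p (0, Complex.I))

/-- `r_{z z̄}` for a real-valued `r`. -/
def rzz (r : ℂ × ℂ → ℝ) (p : ℂ × ℂ) : ℝ := (dz (fun q => dzbar (cx r) q) p).re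

/-- `r_{w w̄}` for a real-valued `r`. -/
def rww (r : ℂ × ℂ → ℝ) (p : ℂ × ℂ) : ℝ := (dw (fun q => dwbar (cx r) q) p).re

/-- `r_{z w̄}` for a real-valued `r`. -/
def rzw (r : ℂ × ℂ → ℝ) (p : ℂ × ℂ) : ℂ := dz (fun q => dwbar (cx r) q) p

/-- The Levi form of `r` applied to the complex tangent vector `⟨r_w, -r_z⟩`:
`𝓛_r = r_{z z̄}|r_w|² + r_{w w̄}|r_z|² − 2 Re (r_{z w̄} r_w r_{z̄})`. -/
def Levi (r : ℂ × ℂ → ℝ) (p : ℂ × ℂ) : ℝ :=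
  rzz r p * ‖dw (cx r) p‖ ^ 2 +
  rww r p * ‖dz (cx r) p‖ ^ 2 -
  2 * (rzw r p * dw (cx r) p * dzbar (cx r) p).re

/-- Determinant of the complex Hessian: `𝓗_f = f_{z z̄} f_{w w̄} − |f_{z w̄}|²`. -/
def Hdet (r : ℂ × ℂ → ℝ) (p : ℂ × ℂ) : ℝ :=
  rzz r p * rww r p - ‖rzw r p‖ ^ 2

/-- The complex Hessian of the real-valued function `ρ` is positive semidefinite at `p`,
as a Hermitian form on `ℂ²`. -/
def PSDHessian (ρ : ℂ × ℂ → ℝ) (p : ℂ × ℂ) : Prop :=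
  ∀ ξ₁ ξ₂ : ℂ,
    0 ≤ rzz ρ p * ‖ξ₁‖ ^ 2 +
        2 * (rzw ρ p * ξ₁ * (starRingEnd ℂ) ξ₂).re +
        rww ρ p * ‖ξ₂‖ ^ 2

end

/-- The model defining function `r_A(z,w) = Im w + |z|⁴ + 100|z|⁶ + 4 Re z Re w − A (Re w)²`. -/
noncomputable def rA (A : ℝ) : ℂ × ℂ → ℝ := fun p =>
  p.2.im + ‖p.1‖ ^ 4 + 100 * ‖p.1‖ ^ 6 +
    4 * p.1.re * p.2.re - A * p.2.re ^ 2

/-- For `A = 8`, `|r_z|²` is not dominated by any constant multiple of the Levi form on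
any neighborhood of the origin: along the curve `t ↦ (t, t/4)` the Levi form vanishes
to order 4 while `|r_z|²` vanishes only to order 2. -/
-- coordinate functions
lemma hX (p : ℂ × ℂ) : HasFDerivAt (fun q : ℂ × ℂ => q.1.re)
    (Complex.reCLM.comp (ContinuousLinearMap.fst ℝ ℂ ℂ)) p :=
  (Complex.reCLM.comp (ContinuousLinearMap.fst ℝ ℂ ℂ)).hasFDerivAt
lemma hY (p : ℂ × ℂ) : HasFDerivAt (fun q : ℂ × ℂ => q.1.im)
    (Complex.imCLM.comp (ContinuousLinearMap.fst ℝ ℂ ℂ)) p :=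
  (Complex.imCLM.comp (ContinuousLinearMap.fst ℝ ℂ ℂ)).hasFDerivAt
lemma hU (p : ℂ × ℂ) : HasFDerivAt (fun q : ℂ × ℂ => q.2.re)
    (Complex.reCLM.comp (ContinuousLinearMap.snd ℝ ℂ ℂ)) p :=
  (Complex.reCLM.comp (ContinuousLinearMap.snd ℝ ℂ ℂ)).hasFDerivAt
lemma hV (p : ℂ × ℂ) : HasFDerivAt (fun q : ℂ × ℂ => q.2.im)
    (Complex.imCLM.comp (ContinuousLinearMap.snd ℝ ℂ ℂ)) p :=
  (Complex.imCLM.comp (ContinuousLinearMap.snd ℝ ℂ ℂ)).hasFDerivAt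

lemma rA8_eq : rA 8 = fun q : ℂ × ℂ =>
    q.2.im + (q.1.re*q.1.re + q.1.im*q.1.im)*(q.1.re*q.1.re + q.1.im*q.1.im)
      + 100*((q.1.re*q.1.re + q.1.im*q.1.im)*((q.1.re*q.1.re + q.1.im*q.1.im)*(q.1.re*q.1.re + q.1.im*q.1.im)))
      + 4*(q.1.re*q.2.re) - 8*(q.2.re*q.2.re) := by
  funext q
  have h2 : ‖q.1‖ ^ 4 = (Complex.normSq q.1)^2 := by
    rw [show (4:ℕ) = 2*2 from rfl, pow_mul, Complex.sq_norm]
  have h3 : ‖q.1‖ ^ 6 = (Complex.normSq q.1)^3 := by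
    rw [show (6:ℕ) = 2*3 from rfl, pow_mul, Complex.sq_norm]
  rw [Complex.normSq_apply] at h2 h3
  simp [rA, h2, h3]; ring

lemma hasF_rA8 (p : ℂ × ℂ) : ∃ L : (ℂ × ℂ) →L[ℝ] ℝ, HasFDerivAt (rA 8) L p ∧
    ∀ v, L v = ((4*(p.1.re^2+p.1.im^2) + 600*(p.1.re^2+p.1.im^2)^2)*p.1.re + 4*p.2.re) * v.1.re
      + ((4*(p.1.re^2+p.1.im^2) + 600*(p.1.re^2+p.1.im^2)^2)*p.1.im) * v.1.im
      + (4*p.1.re - 16*p.2.re) * v.2.re + v.2.im := by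
  have hs := ((hX p).mul (hX p)).add ((hY p).mul (hY p))
  have h := ((((hV p).add (hs.mul hs)).add ((hs.mul (hs.mul hs)).const_mul 100)).add
      (((hX p).mul (hU p)).const_mul 4)).sub (((hU p).mul (hU p)).const_mul 8)
  rw [rA8_eq]
  refine ⟨_, h, fun v => ?_⟩
  simp [ContinuousLinearMap.add_apply, ContinuousLinearMap.smul_apply,
    ContinuousLinearMap.comp_apply, smul_eq_mul]
  ring

lemma fderiv_cx_rA8 (p v : ℂ × ℂ) :
    fderiv ℝ (cx (rA 8)) p v =
      ((((4*(p.1.re^2+p.1.im^2) + 600*(p.1.re^2+p.1.im^2)^2)*p.1.re + 4*p.2.re) * v.1.re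
      + ((4*(p.1.re^2+p.1.im^2) + 600*(p.1.re^2+p.1.im^2)^2)*p.1.im) * v.1.im
      + (4*p.1.re - 16*p.2.re) * v.2.re + v.2.im : ℝ) : ℂ) := by
  obtain ⟨L, hL, hLv⟩ := hasF_rA8 p
  have h2 := Complex.ofRealCLM.hasFDerivAt.comp p hL
  have he : cx (rA 8) = ⇑Complex.ofRealCLM ∘ (rA 8) := rfl
  rw [he, h2.fderiv]
  simp [hLv v]

lemma dzbar_cx (q : ℂ × ℂ) : dzbar (cx (rA 8)) q =
    (((2*(q.1.re*q.1.re+q.1.im*q.1.im) + 300*((q.1.re*q.1.re+q.1.im*q.1.im)*(q.1.re*q.1.re+q.1.im*q.1.im))) : ℝ) : ℂ) * q.1 + ((2*q.2.re : ℝ) : ℂ) := by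
  rw [dzbar, fderiv_cx_rA8, fderiv_cx_rA8]
  apply Complex.ext <;> simp <;> norm_cast <;> ring_nf

lemma dz_cx (q : ℂ × ℂ) : dz (cx (rA 8)) q =
    (((2*(q.1.re^2+q.1.im^2) + 300*(q.1.re^2+q.1.im^2)^2) : ℝ) : ℂ) * ((starRingEnd ℂ) q.1)
      + ((2*q.2.re : ℝ) : ℂ) := by
  rw [dz, fderiv_cx_rA8, fderiv_cx_rA8]
  apply Complex.ext <;> simp <;> norm_cast <;> ring_nf

lemma dw_cx (q : ℂ × ℂ) : dw (cx (rA 8)) q =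
    ((2*q.1.re - 8*q.2.re : ℝ) : ℂ) - Complex.I/2 := by
  rw [dw, fderiv_cx_rA8, fderiv_cx_rA8]
  apply Complex.ext <;> simp <;> norm_cast <;> ring_nf

lemma dwbar_cx (q : ℂ × ℂ) : dwbar (cx (rA 8)) q =
    ((2*q.1.re - 8*q.2.re : ℝ) : ℂ) + Complex.I/2 := by
  rw [dwbar, fderiv_cx_rA8, fderiv_cx_rA8]
  apply Complex.ext <;> simp <;> norm_cast <;> ring_nf

lemma rzz_val (p : ℂ × ℂ) : dz (fun q => dzbar (cx (rA 8)) q) p =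
    ((4*(p.1.re^2+p.1.im^2) + 900*(p.1.re^2+p.1.im^2)^2 : ℝ) : ℂ) := by
  have hfun : (fun q => dzbar (cx (rA 8)) q) = (fun q : ℂ × ℂ =>
      (((2*(q.1.re*q.1.re+q.1.im*q.1.im) + 300*((q.1.re*q.1.re+q.1.im*q.1.im)*(q.1.re*q.1.re+q.1.im*q.1.im))) : ℝ) : ℂ) * q.1
        + ((2*q.2.re : ℝ) : ℂ)) := funext dzbar_cx
  rw [dz, hfun]
  have hs := ((hX p).mul (hX p)).add ((hY p).mul (hY p))
  have hf := (hs.const_mul 2).add ((hs.mul hs).const_mul 300)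
  have hfC := Complex.ofRealCLM.hasFDerivAt.comp p hf
  have hgC := Complex.ofRealCLM.hasFDerivAt.comp p ((hU p).const_mul 2)
  have hfst := (ContinuousLinearMap.fst ℝ ℂ ℂ).hasFDerivAt (x := p)
  have h := (hfC.mul hfst).add hgC
  have hD : fderiv ℝ (fun q : ℂ × ℂ =>
      (((2*(q.1.re*q.1.re+q.1.im*q.1.im) + 300*((q.1.re*q.1.re+q.1.im*q.1.im)*(q.1.re*q.1.re+q.1.im*q.1.im))) : ℝ) : ℂ) * q.1
        + ((2*q.2.re : ℝ) : ℂ)) p = _ := h.fderiv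
  rw [hD]
  simp [ContinuousLinearMap.add_apply, ContinuousLinearMap.smul_apply,
    ContinuousLinearMap.comp_apply, smul_eq_mul]
  apply Complex.ext <;> simp <;> norm_cast <;> ring_nf

lemma rww_rzw_aux (p : ℂ × ℂ) :
    dw (fun q => dwbar (cx (rA 8)) q) p = -4 ∧ dz (fun q => dwbar (cx (rA 8)) q) p = 1 := by
  have hfun : (fun q => dwbar (cx (rA 8)) q) = (fun q : ℂ × ℂ =>
      ((2*q.1.re - 8*q.2.re : ℝ) : ℂ) + Complex.I/2) := funext dwbar_cx
  have hreal := ((hX p).const_mul 2).sub ((hU p).const_mul 8)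
  have h := (Complex.ofRealCLM.hasFDerivAt.comp p hreal).add_const (Complex.I/2)
  have hD : fderiv ℝ (fun q : ℂ × ℂ =>
      ((2*q.1.re - 8*q.2.re : ℝ) : ℂ) + Complex.I/2) p = _ := h.fderiv
  constructor
  · rw [dw, hfun, hD]
    simp [ContinuousLinearMap.add_apply, ContinuousLinearMap.smul_apply,
      ContinuousLinearMap.comp_apply, smul_eq_mul]
    apply Complex.ext <;> simp <;> norm_num
  · rw [dz, hfun, hD]
    simp [ContinuousLinearMap.add_apply, ContinuousLinearMap.smul_apply,
      ContinuousLinearMap.comp_apply, smul_eq_mul]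

lemma dz_at (t : ℝ) : dz (cx (rA 8)) ((t : ℂ), ((t/4 : ℝ) : ℂ)) =
    ((t/2 + 2*t^3 + 300*t^5 : ℝ) : ℂ) := by
  rw [dz_cx]; apply Complex.ext <;> simp <;> norm_cast <;> ring_nf

lemma dzbar_at (t : ℝ) : dzbar (cx (rA 8)) ((t : ℂ), ((t/4 : ℝ) : ℂ)) =
    ((t/2 + 2*t^3 + 300*t^5 : ℝ) : ℂ) := by
  rw [dzbar_cx]; apply Complex.ext <;> simp <;> norm_cast <;> ring_nf

lemma dw_at (t : ℝ) : dw (cx (rA 8)) ((t : ℂ), ((t/4 : ℝ) : ℂ)) = -(Complex.I/2) := by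
  rw [dw_cx]; apply Complex.ext <;> simp <;> ring

lemma absdz_at (t : ℝ) : ‖dz (cx (rA 8)) ((t : ℂ), ((t/4 : ℝ) : ℂ))‖ ^ 2 =
    (t/2 + 2*t^3 + 300*t^5)^2 := by
  rw [dz_at, Complex.sq_norm, Complex.normSq_apply]; simp <;> norm_cast <;> ring_nf

lemma Levi_at (t : ℝ) : Levi (rA 8) ((t : ℂ), ((t/4 : ℝ) : ℂ)) =
    t^2 + 225*t^4 - 4*(t/2 + 2*t^3 + 300*t^5)^2 := by
  have h1 : rzz (rA 8) ((t : ℂ), ((t/4 : ℝ) : ℂ)) = 4*t^2 + 900*t^4 := by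
    rw [rzz, rzz_val]; simp <;> norm_cast <;> ring_nf
  have h2 : rww (rA 8) ((t : ℂ), ((t/4 : ℝ) : ℂ)) = -4 := by
    rw [rww, (rww_rzw_aux _).1]; simp
  have h3 : rzw (rA 8) ((t : ℂ), ((t/4 : ℝ) : ℂ)) = 1 := (rww_rzw_aux _).2
  rw [Levi, h1, h2, h3, dw_at, dzbar_at, absdz_at]
  have h4 : ‖-(Complex.I/2)‖ ^ 2 = 1/4 := by
    simp [Complex.sq_norm, Complex.normSq_apply]; norm_num
  rw [h4]
  simp
  norm_cast
  ring

lemma lower_bound (t : ℝ) : t^2/4 ≤ (t/2 + 2*t^3 + 300*t^5)^2 := by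
  nlinarith [sq_nonneg (t^2), sq_nonneg (t^3), sq_nonneg (t^4), sq_nonneg (t^5)]

lemma upper_bound (t : ℝ) (ht : t^2 ≤ 1) :
    |t^2 + 225*t^4 - 4*(t/2 + 2*t^3 + 300*t^5)^2| ≤ 400000*t^4 := by
  have e : t^2 + 225*t^4 - 4*(t/2 + 2*t^3 + 300*t^5)^2
      = 217*t^4 - 1216*t^6 - 4800*t^8 - 360000*t^10 := by ring
  have h4nn : (0:ℝ) ≤ t^4 := by positivity
  have h6nn : (0:ℝ) ≤ t^6 := by positivity
  have h8nn : (0:ℝ) ≤ t^8 := by positivity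
  have h10nn : (0:ℝ) ≤ t^10 := by positivity
  have ha : t^4 ≤ 1 := by nlinarith
  have hb : t^6 ≤ 1 := by nlinarith
  have h6 : t^6 ≤ t^4 := by nlinarith [mul_nonneg h4nn (sub_nonneg.mpr ht)]
  have h8 : t^8 ≤ t^4 := by nlinarith [mul_nonneg h4nn (sub_nonneg.mpr ha)]
  have h10 : t^10 ≤ t^4 := by nlinarith [mul_nonneg h4nn (sub_nonneg.mpr hb)]
  rw [e, abs_le]
  constructor <;> linarith

theorem no_levi_domination :
    (¬ ∃ C > (0 : ℝ), ∃ U ∈ nhds (0 : ℂ × ℂ), ∀ p ∈ U,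
        ‖dz (cx (rA 8)) p‖ ^ 2 ≤ C * Levi (rA 8) p) ∧
    ∃ c > (0 : ℝ), ∃ δ > (0 : ℝ), ∀ t : ℝ, |t| < δ → t ≠ 0 →
      c * t ^ 2 ≤ ‖dz (cx (rA 8)) ((t : ℂ), ((t / 4 : ℝ) : ℂ))‖ ^ 2 ∧
      |Levi (rA 8) ((t : ℂ), ((t / 4 : ℝ) : ℂ))| ≤ c⁻¹ * t ^ 4 := by
  constructor
  · rintro ⟨C, hC, U, hU, hbd⟩
    obtain ⟨ε, hε, hball⟩ := Metric.mem_nhds_iff.mp hU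
    set t : ℝ := min (ε/2) (min (1/2) (1/(1600000*C+1))) with ht_def
    have hCpos : (0:ℝ) < 1600000*C+1 := by positivity
    have ht0 : 0 < t := lt_min (by positivity) (lt_min (by norm_num) (by positivity))
    have ht_eps : t < ε := lt_of_le_of_lt (min_le_left _ _) (by linarith)
    have ht_half : t ≤ 1/2 := le_trans (min_le_right _ _) (min_le_left _ _)
    have ht_C : t ≤ 1/(1600000*C+1) := le_trans (min_le_right _ _) (min_le_right _ _)
    have hmem : ((t : ℂ), ((t/4 : ℝ) : ℂ)) ∈ U := by
      apply hball
      rw [Metric.mem_ball, dist_zero_right, Prod.norm_def]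
      have h1 : ‖(t : ℂ)‖ = |t| := by simp [Complex.norm_real]
      have h2 : ‖((t/4 : ℝ) : ℂ)‖ = |t/4| := by simp [Complex.norm_real]; rw [abs_div]; norm_num
      rw [h1, h2, abs_of_pos ht0, abs_of_pos (by linarith : (0:ℝ) < t/4)]
      rw [max_eq_left (by linarith)]
      exact ht_eps
    have hineq := hbd _ hmem
    rw [absdz_at, Levi_at] at hineq
    have ht2 : t^2 ≤ 1 := by nlinarith
    have hLe := upper_bound t ht2
    have hLevi_le : t^2 + 225*t^4 - 4*(t/2 + 2*t^3 + 300*t^5)^2 ≤ 400000*t^4 :=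
      le_trans (le_abs_self _) hLe
    have hlow := lower_bound t
    have hA : t^2/4 ≤ 400000*C*t^4 := by
      have := mul_le_mul_of_nonneg_left hLevi_le (le_of_lt hC)
      nlinarith
    have h8 : t^2*(1600000*C+1) ≤ 1 := by
      have h6 : t^2 ≤ t := by nlinarith
      have h7 : t^2 ≤ 1/(1600000*C+1) := le_trans h6 ht_C
      exact (le_div_iff₀ hCpos).mp h7
    nlinarith [sq_nonneg t, mul_pos ht0 ht0, mul_pos (mul_pos ht0 ht0) (mul_pos ht0 ht0)]
  · refine ⟨(400000:ℝ)⁻¹, by norm_num, 1, by norm_num, fun t ht htne => ?_⟩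
    have ht2 : t^2 ≤ 1 := by
      have := abs_lt.mp ht
      nlinarith
    constructor
    · rw [absdz_at]
      have := lower_bound t
      have : (400000:ℝ)⁻¹ * t^2 ≤ t^2/4 := by nlinarith [sq_nonneg t]
      linarith [lower_bound t]
    · rw [Levi_at, inv_inv]
      exact upper_bound t ht2
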